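/- Let p be an odd prime and q = p^2. For k ≥ 1, σ**(x^{2k}) splits over F_q (is a product of linear factors) if and only if k ∈ Ω. -/

import Mathlib

open Polynomial

variable {F : Type*} [Field F]

/-- `D` is a (monic) unitary divisor of `S`: `D ∣ S` and `gcd(D, S/D) = 1`. -/
def IsUnitaryDivisor (D S : Polynomial F) : Prop :=
  D.Monic ∧ D ∣ S ∧ IsCoprime D (S / D)

/-- `D` is a (monic) bi-unitary divisor of `S`: `gcd_u(D, S/D) = 1`, i.e. the only common
monic unitary divisor of `D` and `S/D` is `1`. -/
def IsBiunitaryDivisor (D S : Polynomial F) : Prop :=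
  D.Monic ∧ D ∣ S ∧
    ∀ G : Polynomial F, IsUnitaryDivisor G D → IsUnitaryDivisor G (S / D) → G = 1

/-- `σ(S)`: the sum of all monic divisors of `S`. -/
noncomputable def sigma' (S : Polynomial F) : Polynomial F :=
  ∑ᶠ D ∈ {D : Polynomial F | D.Monic ∧ D ∣ S}, D

/-- `σ**(S)`: the sum of all monic bi-unitary divisors of `S`. -/
noncomputable def sigmaStarStar (S : Polynomial F) : Polynomial F :=
  ∑ᶠ D ∈ {D : Polynomial F | IsBiunitaryDivisor D S}, D

/-- `S` is bi-unitary perfect: `σ**(S) = S`. -/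
def IsBUP (S : Polynomial F) : Prop := sigmaStarStar S = S

/-- `Ω₁ = {N ∈ ℕ* : N ∣ p²-1 and 2N+2 ∣ p²-1}`. -/
def Omega1 (p : ℕ) : Set ℕ := {N | 0 < N ∧ N ∣ (p ^ 2 - 1) ∧ (2 * N + 2) ∣ (p ^ 2 - 1)}

/-- `Ω₂ = {pN : N ∈ ℕ*, N ∣ p²-1 and 2pN+2 ∣ p²-1}`. -/
def Omega2 (p : ℕ) : Set ℕ :=
  {m | ∃ N : ℕ, 0 < N ∧ m = p * N ∧ N ∣ (p ^ 2 - 1) ∧ (2 * p * N + 2) ∣ (p ^ 2 - 1)}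

/-- `Ω₃ = {N ∈ ℕ* : N ∣ p²-1, 2N+2 = M·p with M ∣ p²-1}`. -/
def Omega3 (p : ℕ) : Set ℕ :=
  {N | 0 < N ∧ N ∣ (p ^ 2 - 1) ∧ ∃ M : ℕ, M ∣ (p ^ 2 - 1) ∧ 2 * N + 2 = M * p}

/-- `Ω₄ = {N ∈ ℕ* : N ∣ p²-1, 2N+2 = M·p² with M ∣ p²-1}`. -/
def Omega4 (p : ℕ) : Set ℕ :=
  {N | 0 < N ∧ N ∣ (p ^ 2 - 1) ∧ ∃ M : ℕ, M ∣ (p ^ 2 - 1) ∧ 2 * N + 2 = M * p ^ 2}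

/-- `Ω = Ω₁ ∪ Ω₂ ∪ Ω₃ ∪ Ω₄`. -/
def OmegaSet (p : ℕ) : Set ℕ := Omega1 p ∪ Omega2 p ∪ Omega3 p ∪ Omega4 p


set_option linter.unusedSectionVars false
open Finset

lemma monic_dvd_X_pow {D : F[X]} {n : ℕ} (h1 : D.Monic) (h2 : D ∣ X ^ n) :
    ∃ i ≤ n, D = X ^ i := by
  obtain ⟨i, hi, hassoc⟩ := (dvd_prime_pow prime_X n).1 h2
  exact ⟨i, hi, eq_of_monic_of_associated h1 (monic_X_pow i) hassoc⟩

lemma X_pow_div_X_pow {j m : ℕ} (h : j ≤ m) : (X ^ m : F[X]) / X ^ j = X ^ (m - j) := by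
  have : (X ^ m : F[X]) = X ^ j * X ^ (m - j) := by rw [← pow_add, Nat.add_sub_cancel' h]
  rw [this, mul_div_cancel_left₀ _ (pow_ne_zero _ X_ne_zero)]

lemma unitary_X_pow {G : F[X]} {m : ℕ} (h : IsUnitaryDivisor G (X ^ m)) :
    G = 1 ∨ G = X ^ m := by
  obtain ⟨hm, hdvd, hcop⟩ := h
  obtain ⟨j, hj, rfl⟩ := monic_dvd_X_pow hm hdvd
  rcases Nat.eq_zero_or_pos j with rfl | hj0
  · exact Or.inl (pow_zero X)
  rcases eq_or_ne j m with rfl | hjm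
  · exact Or.inr rfl
  exfalso
  rw [X_pow_div_X_pow hj] at hcop
  have hu : IsUnit (X : F[X]) :=
    hcop.isUnit_of_dvd' (dvd_pow_self X hj0.ne') (dvd_pow_self X (by omega))
  exact Polynomial.not_isUnit_X hu

lemma biunitary_X_pow_iff {D : F[X]} {k : ℕ} (hk : 1 ≤ k) :
    IsBiunitaryDivisor D (X ^ (2 * k)) ↔ ∃ i, i ≤ 2 * k ∧ i ≠ k ∧ D = X ^ i := by
  constructor
  · rintro ⟨hm, hdvd, huni⟩
    obtain ⟨i, hi, rfl⟩ := monic_dvd_X_pow hm hdvd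
    refine ⟨i, hi, ?_, rfl⟩
    rintro rfl
    have hdiv : (X ^ (2 * i) : F[X]) / X ^ i = X ^ i := by
      rw [X_pow_div_X_pow (by omega)]; congr 1; omega
    have hunit : IsUnitaryDivisor (X ^ i : F[X]) (X ^ i) := by
      refine ⟨monic_X_pow i, dvd_rfl, ?_⟩
      rw [EuclideanDomain.div_self (pow_ne_zero _ X_ne_zero)]
      exact isCoprime_one_right
    have := huni (X ^ i) hunit (by rw [hdiv]; exact hunit)
    have := congrArg natDegree this
    simp [natDegree_X_pow] at this
    omega
  · rintro ⟨i, hi, hik, rfl⟩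
    refine ⟨monic_X_pow i, pow_dvd_pow X hi, ?_⟩
    intro G h1 h2
    rw [X_pow_div_X_pow hi] at h2
    rcases unitary_X_pow h1 with rfl | rfl
    · rfl
    rcases unitary_X_pow h2 with h | h
    · exact h
    · exfalso
      have := congrArg natDegree h
      simp [natDegree_X_pow] at this
      omega

lemma sigmaStarStar_X_pow {k : ℕ} (hk : 1 ≤ k) :
    sigmaStarStar (X ^ (2 * k) : F[X]) =
      (∑ i ∈ range k, X ^ i) * (X ^ (k + 1) + 1) := by
  classical
  have hinj : Function.Injective (fun i : ℕ => (X ^ i : F[X])) := by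
    intro a b h
    simpa [natDegree_X_pow] using congrArg natDegree h
  have hset : {D : F[X] | IsBiunitaryDivisor D (X ^ (2 * k))} =
      ↑(((range (2 * k + 1)).erase k).image (fun i => (X ^ i : F[X]))) := by
    ext D
    simp only [Set.mem_setOf_eq, biunitary_X_pow_iff hk, coe_image, Set.mem_image,
      Finset.coe_erase, Set.mem_diff, Finset.coe_range, Set.mem_Iio, Set.mem_singleton_iff]
    constructor
    · rintro ⟨i, h1, h2, rfl⟩; exact ⟨i, ⟨by omega, h2⟩, rfl⟩
    · rintro ⟨i, ⟨h1, h2⟩, rfl⟩; exact ⟨i, by omega, h2, rfl⟩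
  rw [sigmaStarStar, hset, finsum_mem_coe_finset, Finset.sum_image (fun a _ b _ h => hinj h)]
  have hX1 : (X - 1 : F[X]) ≠ 0 := by simpa using X_sub_C_ne_zero (1 : F)
  apply mul_right_cancel₀ hX1
  have hsum : ∑ i ∈ (range (2 * k + 1)).erase k, (X : F[X]) ^ i =
      (∑ i ∈ range (2 * k + 1), X ^ i) - X ^ k := by
    have := Finset.sum_erase_add (range (2 * k + 1)) (fun i => (X : F[X]) ^ i)
      (a := k) (by simp [Finset.mem_range]; omega)
    linear_combination this
  have h2 : (∑ i ∈ range k, (X : F[X]) ^ i) * ((X ^ (k + 1) + 1) * (X - 1)) =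
      (X ^ k - 1) * (X ^ (k + 1) + 1) := by
    rw [mul_comm ((X : F[X]) ^ (k + 1) + 1), ← mul_assoc, geom_sum_mul]
  rw [mul_assoc, h2, hsum, sub_mul, geom_sum_mul,
    show 2 * k + 1 = k + (k + 1) by ring, pow_add]
  ring

section FF
variable {K : Type*} [Field K] [Fintype K]

lemma pow_gcd_eq_one' {x : K} {a b : ℕ} (ha : x ^ a = 1) (hb : x ^ b = 1) :
    x ^ Nat.gcd a b = 1 :=
  orderOf_dvd_iff_pow_eq_one.mp
    (Nat.dvd_gcd (orderOf_dvd_of_pow_eq_one ha) (orderOf_dvd_of_pow_eq_one hb))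

lemma roots_card_le_of_pow_eq_one {f : K[X]} {d : ℕ} (hd : d ≠ 0)
    (hnd : f.roots.Nodup) (hroots : ∀ x ∈ f.roots, x ^ d = 1) :
    Multiset.card f.roots ≤ d := by
  classical
  have hne : (X ^ d - 1 : K[X]) ≠ 0 := by
    have := monic_X_pow_sub_C (1 : K) hd
    rw [C_1] at this
    exact this.ne_zero
  have hsub : f.roots.toFinset ⊆ (X ^ d - 1 : K[X]).roots.toFinset := by
    intro x hx
    rw [Multiset.mem_toFinset] at hx ⊢
    rw [mem_roots hne]
    simp [IsRoot, sub_eq_zero, hroots x hx]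
  calc Multiset.card f.roots = f.roots.toFinset.card :=
        (Multiset.toFinset_card_of_nodup hnd).symm
    _ ≤ (X ^ d - 1 : K[X]).roots.toFinset.card := Finset.card_le_card hsub
    _ ≤ Multiset.card (X ^ d - 1 : K[X]).roots := Multiset.toFinset_card_le _
    _ ≤ (X ^ d - 1 : K[X]).natDegree := card_roots' _
    _ = d := by rw [← C_1 (R := K), natDegree_X_pow_sub_C]

lemma splits_X_pow_card_sub_X :
    ((X ^ Fintype.card K - X : K[X])).Splits := by
  rw [splits_iff_card_roots, FiniteField.roots_X_pow_card_sub_X,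
    FiniteField.X_pow_card_sub_X_natDegree_eq K Fintype.one_lt_card]
  simp

variable (p : ℕ) [hp : Fact p.Prime] [CharP K p]

lemma splits_X_pow_sub_one_iff {m : ℕ} (hm : m ≠ 0) (hpm : ¬ p ∣ m) :
    (X ^ m - 1 : K[X]).Splits ↔ m ∣ Fintype.card K - 1 := by
  have hq1 : 1 < Fintype.card K := Fintype.one_lt_card
  constructor
  · intro hs
    have hsep : (X ^ m - 1 : K[X]).Separable := by
      have := separable_X_pow_sub_C' p m (1 : K) hpm one_ne_zero
      rwa [C_1] at this
    have hnd := nodup_roots hsep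
    have hcard : Multiset.card (X ^ m - 1 : K[X]).roots = m := by
      rw [splits_iff_card_roots.mp hs]
      conv_lhs => rw [← C_1 (R := K)]
      rw [natDegree_X_pow_sub_C]
    set d := Nat.gcd m (Fintype.card K - 1) with hd
    have hdm : d ∣ m := Nat.gcd_dvd_left _ _
    have hroots : ∀ x ∈ (X ^ m - 1 : K[X]).roots, x ^ d = 1 := by
      intro x hx
      have hne : (X ^ m - 1 : K[X]) ≠ 0 := by
        have := monic_X_pow_sub_C (1 : K) hm; rw [C_1] at this; exact this.ne_zero
      have hxm : x ^ m = 1 := by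
        have := (mem_roots hne).mp hx
        simpa [IsRoot, sub_eq_zero] using this
      have hx0 : x ≠ 0 := by
        rintro rfl
        rw [zero_pow hm] at hxm
        exact zero_ne_one hxm
      exact pow_gcd_eq_one' hxm (FiniteField.pow_card_sub_one_eq_one x hx0)
    have hd0 : d ≠ 0 := Nat.gcd_ne_zero_left hm
    have hle : m ≤ d := hcard ▸ roots_card_le_of_pow_eq_one hd0 hnd hroots
    have heq : d = m :=
      le_antisymm (Nat.le_of_dvd (Nat.pos_of_ne_zero hm) hdm) hle
    exact heq ▸ Nat.gcd_dvd_right m (Fintype.card K - 1)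
  · intro hdvd
    obtain ⟨c, hc⟩ := hdvd
    have h1 : (X ^ m - 1 : K[X]) ∣ X ^ (Fintype.card K - 1) - 1 := by
      have := sub_dvd_pow_sub_pow (X ^ m : K[X]) 1 c
      rwa [← pow_mul, one_pow, ← hc] at this
    have h2 : (X ^ (Fintype.card K - 1) - 1 : K[X]) ∣ X ^ Fintype.card K - X := by
      refine ⟨X, ?_⟩
      rw [sub_mul, one_mul, ← pow_succ, Nat.sub_add_cancel hq1.le]
    exact Splits.of_dvd splits_X_pow_card_sub_X (FiniteField.X_pow_card_sub_X_ne_zero K hq1)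
      (h1.trans h2)

end FF

section FF2
variable {K : Type*} [Field K] [Fintype K] (p : ℕ) [hp : Fact p.Prime] [CharP K p]

lemma splits_X_pow_add_one_iff {m : ℕ} (hm : m ≠ 0) (hpm : ¬ p ∣ m) (hp2 : p ≠ 2) :
    (X ^ m + 1 : K[X]).Splits ↔ 2 * m ∣ Fintype.card K - 1 := by
  have hrw : (X ^ m + 1 : K[X]) = X ^ m - C (-1) := by
    rw [map_neg, C_1, sub_neg_eq_add]
  have hne : (X ^ m + 1 : K[X]) ≠ 0 := by
    rw [hrw]; exact (monic_X_pow_sub_C (-1 : K) hm).ne_zero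
  have hneg1 : (-1 : K) ≠ 1 := by
    haveI : Fact (2 < p) := ⟨lt_of_le_of_ne hp.out.two_le (Ne.symm hp2)⟩
    exact CharP.neg_one_ne_one K p
  constructor
  · intro hs
    have hsep : (X ^ m + 1 : K[X]).Separable := by
      rw [hrw]
      exact separable_X_pow_sub_C' p m (-1 : K) hpm (neg_ne_zero.mpr one_ne_zero)
    have hnd := nodup_roots hsep
    have hcard : Multiset.card (X ^ m + 1 : K[X]).roots = m := by
      rw [splits_iff_card_roots.mp hs]
      conv_lhs => rw [hrw]
      rw [natDegree_X_pow_sub_C]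
    have hrootsm : ∀ x ∈ (X ^ m + 1 : K[X]).roots, x ^ m = -1 := by
      intro x hx
      have h0 : x ^ m + 1 = 0 := by simpa [IsRoot] using (mem_roots hne).mp hx
      exact eq_neg_of_add_eq_zero_left h0
    set D := Nat.gcd (2 * m) (Fintype.card K - 1) with hDdef
    have hD0 : D ≠ 0 := Nat.gcd_ne_zero_left (by omega)
    have hDdvd : D ∣ 2 * m := Nat.gcd_dvd_left _ _
    have hDq : D ∣ Fintype.card K - 1 := Nat.gcd_dvd_right _ _
    have hrootsD : ∀ x ∈ (X ^ m + 1 : K[X]).roots, x ^ D = 1 := by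
      intro x hx
      have hxm := hrootsm x hx
      have hx2m : x ^ (2 * m) = 1 := by
        rw [two_mul, pow_add, hxm]; simp
      have hx0 : x ≠ 0 := by
        rintro rfl
        rw [zero_pow hm] at hxm
        exact neg_ne_zero.mpr one_ne_zero hxm.symm
      exact pow_gcd_eq_one' hx2m (FiniteField.pow_card_sub_one_eq_one x hx0)
    have hmD : m ≤ D := hcard ▸ roots_card_le_of_pow_eq_one hD0 hnd hrootsD
    -- get a root
    have hex : ∃ x, x ∈ (X ^ m + 1 : K[X]).roots := by
      have : Multiset.card (X ^ m + 1 : K[X]).roots ≠ 0 := by omega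
      exact Multiset.exists_mem_of_ne_zero (by
        intro h; exact this (by rw [h]; simp))
    obtain ⟨η, hη⟩ := hex
    have hDne_m : D ≠ m := by
      intro hDm
      have h1 := hrootsD η hη
      have h2 := hrootsm η hη
      rw [hDm] at h1
      rw [h1] at h2
      exact hneg1 h2.symm
    obtain ⟨e, he⟩ := hDdvd
    have he0 : e ≠ 0 := by rintro rfl; omega
    have he1 : e = 1 := by
      by_contra hne1
      have he2 : 2 ≤ e := by omega
      have : D * 2 ≤ D * e := Nat.mul_le_mul_left D he2
      omega
    rw [he1, mul_one] at he
    rw [he]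
    exact hDq
  · intro hdvd
    have hp2m : ¬ p ∣ 2 * m := by
      rintro h
      rcases (Nat.Prime.dvd_mul hp.out).mp h with h2 | hm'
      · exact hp2 ((Nat.prime_dvd_prime_iff_eq hp.out Nat.prime_two).mp h2)
      · exact hpm hm'
    have hsplit2m : (X ^ (2 * m) - 1 : K[X]).Splits :=
      (splits_X_pow_sub_one_iff p (by omega) hp2m).mpr hdvd
    have hdvdpoly : (X ^ m + 1 : K[X]) ∣ X ^ (2 * m) - 1 := by
      refine ⟨X ^ m - 1, ?_⟩
      rw [two_mul, pow_add]
      ring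
    have hne2m : (X ^ (2 * m) - 1 : K[X]) ≠ 0 := by
      have := monic_X_pow_sub_C (1 : K) (show 2 * m ≠ 0 by omega)
      rw [C_1] at this; exact this.ne_zero
    exact Splits.of_dvd hsplit2m hne2m hdvdpoly

lemma splits_X_pow_sub_one_iff_ordCompl {j : ℕ} (hj : j ≠ 0) :
    (X ^ j - 1 : K[X]).Splits ↔ ordCompl[p] j ∣ Fintype.card K - 1 := by
  set a := j.factorization p with ha
  set m := ordCompl[p] j with hmdef
  have hm0 : m ≠ 0 := (Nat.ordCompl_pos p hj).ne'
  have hpm : ¬ p ∣ m := Nat.not_dvd_ordCompl hp.out hj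
  have hfact : p ^ a * m = j := Nat.ordProj_mul_ordCompl_eq_self j p
  have hmne : (X ^ m - 1 : K[X]) ≠ 0 := by
    have := monic_X_pow_sub_C (1 : K) hm0
    rw [C_1] at this; exact this.ne_zero
  have hpoly : ((X ^ m - 1 : K[X])) ^ p ^ a = X ^ j - 1 := by
    rw [sub_pow_char_pow, one_pow, ← pow_mul, mul_comm m, hfact]
  rw [← hpoly]
  constructor
  · intro hs
    refine (splits_X_pow_sub_one_iff p hm0 hpm).mp ?_
    exact Splits.of_dvd hs (pow_ne_zero _ hmne)
      (dvd_pow_self _ (pow_ne_zero a hp.out.pos.ne'))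
  · intro h
    exact Splits.pow ((splits_X_pow_sub_one_iff p hm0 hpm).mpr h) _

lemma splits_X_pow_add_one_iff_ordCompl {j : ℕ} (hj : j ≠ 0) (hp2 : p ≠ 2) :
    (X ^ j + 1 : K[X]).Splits ↔
      2 * ordCompl[p] j ∣ Fintype.card K - 1 := by
  set a := j.factorization p with ha
  set m := ordCompl[p] j with hmdef
  have hm0 : m ≠ 0 := (Nat.ordCompl_pos p hj).ne'
  have hpm : ¬ p ∣ m := Nat.not_dvd_ordCompl hp.out hj
  have hfact : p ^ a * m = j := Nat.ordProj_mul_ordCompl_eq_self j p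
  have hmne : (X ^ m + 1 : K[X]) ≠ 0 := by
    have h := monic_X_pow_sub_C (-1 : K) hm0
    rw [map_neg, C_1, sub_neg_eq_add] at h
    exact h.ne_zero
  have hpoly : ((X ^ m + 1 : K[X])) ^ p ^ a = X ^ j + 1 := by
    rw [add_pow_char_pow, one_pow, ← pow_mul, mul_comm m, hfact]
  rw [← hpoly]
  constructor
  · intro hs
    refine (splits_X_pow_add_one_iff p hm0 hpm hp2).mp ?_
    exact Splits.of_dvd hs (pow_ne_zero _ hmne)
      (dvd_pow_self _ (pow_ne_zero a hp.out.pos.ne'))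
  · intro h
    exact Splits.pow ((splits_X_pow_add_one_iff p hm0 hpm hp2).mpr h) _

end FF2

lemma ordCompl_eq_self_of_not_dvd {p j : ℕ} (h : ¬ p ∣ j) : ordCompl[p] j = j := by
  rw [Nat.factorization_eq_zero_of_not_dvd h, pow_zero, Nat.div_one]

lemma ordCompl_pow_mul {p t N : ℕ} (hp : p.Prime) (hN : N ≠ 0) (h : ¬ p ∣ N) :
    ordCompl[p] (p ^ t * N) = N := by
  have h1 : (p ^ t * N).factorization p = t := by
    rw [Nat.factorization_mul (pow_ne_zero t hp.pos.ne') hN, Finsupp.add_apply,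
      hp.factorization_pow, Finsupp.single_eq_same, Nat.factorization_eq_zero_of_not_dvd h,
      add_zero]
  rw [h1, Nat.mul_div_cancel_left _ (pow_pos hp.pos t)]

lemma omega_iff {p : ℕ} (hp : p.Prime) (hodd : Odd p) {k : ℕ} (hk : 1 ≤ k) :
    (ordCompl[p] k ∣ p ^ 2 - 1 ∧ 2 * ordCompl[p] (k + 1) ∣ p ^ 2 - 1) ↔ k ∈ OmegaSet p := by
  have hpne2 : p ≠ 2 := by rintro rfl; exact (by decide : ¬ Odd 2) hodd
  have hp3 : 3 ≤ p := by
    have := hp.two_le; omega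
  have hn9 : 9 ≤ p ^ 2 := by nlinarith
  have hnpos : 0 < p ^ 2 - 1 := by omega
  have hpn : ¬ p ∣ p ^ 2 - 1 := by
    intro h
    have h2 : p ∣ p ^ 2 := dvd_pow_self p (by norm_num)
    have h3 := Nat.dvd_sub h2 h
    rw [show p ^ 2 - (p ^ 2 - 1) = 1 by omega] at h3
    have := Nat.le_of_dvd one_pos h3
    omega
  simp only [OmegaSet, Omega1, Omega2, Omega3, Omega4, Set.mem_union, Set.mem_setOf_eq]
  constructor
  · rintro ⟨h1, h2⟩
    by_cases hpk : p ∣ k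
    · -- Ω₂
      have hpk1 : ¬ p ∣ (k + 1) := by
        intro h
        have h3 := Nat.dvd_sub h hpk
        rw [show k + 1 - k = 1 by omega] at h3
        have := Nat.le_of_dvd one_pos h3
        omega
      rw [ordCompl_eq_self_of_not_dvd hpk1] at h2
      set a := k.factorization p with hadef
      set m := ordCompl[p] k with hmdef
      have hfact : p ^ a * m = k := Nat.ordProj_mul_ordCompl_eq_self k p
      have hmpos : 0 < m := Nat.ordCompl_pos p (by omega)
      have ha1 : 1 ≤ a := (hp.factorization_pos_of_dvd (by omega) hpk)
      have ha : a = 1 := by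
        by_contra hne
        have hA : p ^ 2 ≤ p ^ a := Nat.pow_le_pow_right (by omega) (by omega)
        have hB : p ^ a ≤ k := by
          calc p ^ a = p ^ a * 1 := (mul_one _).symm
            _ ≤ p ^ a * m := Nat.mul_le_mul_left _ hmpos
            _ = k := hfact
        have hC : 2 * (k + 1) ≤ p ^ 2 - 1 := Nat.le_of_dvd hnpos h2
        omega
      rw [ha, pow_one] at hfact
      refine Or.inl (Or.inl (Or.inr ⟨m, hmpos, hfact.symm, h1, ?_⟩))
      have he : 2 * p * m + 2 = 2 * (k + 1) := by
        have h' : 2 * p * m = 2 * (p * m) := by ring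
        rw [h', hfact]
        omega
      rw [he]
      exact h2
    · rw [ordCompl_eq_self_of_not_dvd hpk] at h1
      by_cases hpk1 : p ∣ (k + 1)
      · -- Ω₃ or Ω₄
        set b := (k+1).factorization p with hbdef
        set M := ordCompl[p] (k+1) with hMdef
        have hfact : p ^ b * M = k + 1 := Nat.ordProj_mul_ordCompl_eq_self (k+1) p
        have hMpos : 0 < M := Nat.ordCompl_pos p (by omega)
        have hb1 : 1 ≤ b := hp.factorization_pos_of_dvd (by omega) hpk1
        have hkle : k ≤ p ^ 2 - 1 := Nat.le_of_dvd hnpos h1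
        have hb2 : b ≤ 2 := by
          by_contra hgt
          have hA : p ^ 3 ≤ p ^ b := Nat.pow_le_pow_right (by omega) (by omega)
          have hB : p ^ b ≤ k + 1 := by
            calc p ^ b = p ^ b * 1 := (mul_one _).symm
              _ ≤ p ^ b * M := Nat.mul_le_mul_left _ hMpos
              _ = k + 1 := hfact
          have h3 : 3 * p ^ 2 ≤ p ^ 3 := by nlinarith
          omega
        rcases (by omega : b = 1 ∨ b = 2) with hb | hb
        · rw [hb, pow_one] at hfact
          refine Or.inl (Or.inr ⟨by omega, h1, 2 * M, h2, ?_⟩)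
          have h' : 2 * M * p = 2 * (p * M) := by ring
          rw [h', hfact]
          omega
        · rw [hb] at hfact
          refine Or.inr ⟨by omega, h1, 2 * M, h2, ?_⟩
          have h' : 2 * M * p ^ 2 = 2 * (p ^ 2 * M) := by ring
          rw [h', hfact]
          omega
      · -- Ω₁
        rw [ordCompl_eq_self_of_not_dvd hpk1] at h2
        exact Or.inl (Or.inl (Or.inl ⟨by omega, h1,
          by rwa [show 2 * k + 2 = 2 * (k + 1) by ring]⟩))
  · intro hmem
    rcases hmem with ((⟨hk0, h1, h2⟩ | ⟨N, hN0, rfl, hN1, hN2⟩) | ⟨hk0, h1, M, hM1, hM2⟩) |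
      ⟨hk0, h1, M, hM1, hM2⟩
    · -- Ω₁
      have hpk : ¬ p ∣ k := fun h => hpn (h.trans h1)
      have hpk1 : ¬ p ∣ (k + 1) := fun h =>
        hpn (h.trans (dvd_trans ⟨2, by ring⟩ h2))
      rw [ordCompl_eq_self_of_not_dvd hpk, ordCompl_eq_self_of_not_dvd hpk1]
      exact ⟨h1, by rwa [show 2 * (k + 1) = 2 * k + 2 by ring]⟩
    · -- Ω₂
      have hpN : ¬ p ∣ N := fun h => hpn (h.trans hN1)
      have hpk1 : ¬ p ∣ (p * N + 1) := by
        intro h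
        have h3 := (Nat.dvd_add_right (Dvd.intro N rfl)).mp h
        have := Nat.le_of_dvd one_pos h3
        omega
      have e1 : ordCompl[p] (p * N) = N := by
        rw [show p * N = p ^ 1 * N by ring]
        exact ordCompl_pow_mul hp (by omega) hpN
      have e2 : ordCompl[p] (p * N + 1) = p * N + 1 :=
        ordCompl_eq_self_of_not_dvd hpk1
      rw [e1, e2]
      exact ⟨hN1, by rwa [show 2 * (p * N + 1) = 2 * p * N + 2 by ring]⟩
    · -- Ω₃
      have hpk : ¬ p ∣ k := fun h => hpn (h.trans h1)
      have hM2' : 2 ∣ M := by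
        have h2d : (2:ℕ) ∣ M * p := ⟨k + 1, by omega⟩
        rcases (Nat.Prime.dvd_mul Nat.prime_two).mp h2d with h | h
        · exact h
        · exfalso; rw [Nat.odd_iff] at hodd; omega
      obtain ⟨M', rfl⟩ := hM2'
      have hM'0 : M' ≠ 0 := by rintro rfl; omega
      have hkM : k + 1 = p ^ 1 * M' := by
        have h' : 2 * (k + 1) = 2 * (p ^ 1 * M') := by
          rw [pow_one]
          have : 2 * (p * M') = 2 * M' * p := by ring
          rw [this, ← hM2]
          ring
        omega
      have hpM' : ¬ p ∣ M' := fun h => hpn (h.trans (dvd_trans ⟨2, by ring⟩ hM1))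
      rw [ordCompl_eq_self_of_not_dvd hpk, hkM, ordCompl_pow_mul hp hM'0 hpM']
      exact ⟨h1, hM1⟩
    · -- Ω₄
      have hpk : ¬ p ∣ k := fun h => hpn (h.trans h1)
      have hM2' : 2 ∣ M := by
        have h2d : (2:ℕ) ∣ M * p ^ 2 := ⟨k + 1, by omega⟩
        rcases (Nat.Prime.dvd_mul Nat.prime_two).mp h2d with h | h
        · exact h
        · exfalso
          have h' : 2 ∣ p := Nat.Prime.dvd_of_dvd_pow Nat.prime_two h
          rw [Nat.odd_iff] at hodd; omega
      obtain ⟨M', rfl⟩ := hM2'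
      have hM'0 : M' ≠ 0 := by rintro rfl; omega
      have hkM : k + 1 = p ^ 2 * M' := by
        have h' : 2 * (k + 1) = 2 * (p ^ 2 * M') := by
          have : 2 * (p ^ 2 * M') = 2 * M' * p ^ 2 := by ring
          rw [this, ← hM2]
          ring
        omega
      have hpM' : ¬ p ∣ M' := fun h => hpn (h.trans (dvd_trans ⟨2, by ring⟩ hM1))
      rw [ordCompl_eq_self_of_not_dvd hpk, hkM, ordCompl_pow_mul hp hM'0 hpM']
      exact ⟨h1, hM1⟩

theorem stmt9 (p : ℕ) [Fact p.Prime] (hp : Odd p) (k : ℕ) (hk : 1 ≤ k) :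
    (sigmaStarStar (X ^ (2 * k) : Polynomial (GaloisField p 2))).Splits ↔ k ∈ OmegaSet p := by
  classical
  haveI : Fintype (GaloisField p 2) := Fintype.ofFinite _
  have hcard : Fintype.card (GaloisField p 2) = p ^ 2 := by
    rw [← Nat.card_eq_fintype_card, GaloisField.card p 2 (by norm_num : (2:ℕ) ≠ 0)]
  have hp2 : p ≠ 2 := by rintro rfl; exact (by decide : ¬ Odd 2) hp
  rw [sigmaStarStar_X_pow hk]
  have hXk : (X ^ k - 1 : Polynomial (GaloisField p 2)) ≠ 0 := by
    have h := monic_X_pow_sub_C (1 : GaloisField p 2) (by omega : k ≠ 0)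
    rw [C_1] at h; exact h.ne_zero
  have hfne : (∑ i ∈ Finset.range k, (X : Polynomial (GaloisField p 2)) ^ i) ≠ 0 := by
    intro h
    apply hXk
    rw [← geom_sum_mul, h, zero_mul]
  have hgne : ((X : Polynomial (GaloisField p 2)) ^ (k + 1) + 1) ≠ 0 := by
    have h := monic_X_pow_sub_C (-1 : GaloisField p 2) (by omega : k + 1 ≠ 0)
    rw [map_neg, C_1, sub_neg_eq_add] at h
    exact h.ne_zero
  rw [splits_mul hfne hgne]
  have hfs : (∑ i ∈ Finset.range k, (X : Polynomial (GaloisField p 2)) ^ i).Splits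
      ↔ (X ^ k - 1 : Polynomial (GaloisField p 2)).Splits := by
    constructor
    · intro h
      rw [← geom_sum_mul]
      refine Splits.mul h ?_
      rw [show (X - 1 : Polynomial (GaloisField p 2)) = X - C 1 by rw [C_1]]
      exact Splits.X_sub_C _
    · intro h
      exact Splits.of_dvd h hXk ⟨X - 1, (geom_sum_mul _ _).symm⟩
  rw [hfs, splits_X_pow_sub_one_iff_ordCompl p (by omega : k ≠ 0),
    splits_X_pow_add_one_iff_ordCompl p (by omega : k + 1 ≠ 0) hp2, hcard]
  exact omega_iff Fact.out hp hk
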